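/- For all positive integers K and t with 2t ≤ K, set α = gcd(K, t), F = (2t/α) · C(K/α, 2t/α), Z = (t/α) · C(K/α − 1, 2t/α − 1), and S = ((K−t)/α) · C(K/α, 2t/α), where C(n,k) denotes the binomial coefficient. Then there exists a (t, K, F, Z, S) multiple-antenna placement delivery array, and moreover 2t · S = (K−t) · F, so the normalized delivery time S/F equals (K−t)/(2t). -/

import Mathlib

/-- An `(L, K, F, Z, S)` multiple-antenna placement delivery array (MAPDA). -/
def IsMAPDA (L K F Z S : ℕ) (P : Fin F → Fin K → Option (Fin S)) : Prop :=
  (∀ k : Fin K, (Finset.univ.filter fun f : Fin F => P f k = none).card = Z) ∧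
  (∀ s : Fin S, ∃ f k, P f k = some s) ∧
  (∀ (s : Fin S) (k : Fin K) (f₁ f₂ : Fin F),
      P f₁ k = some s → P f₂ k = some s → f₁ = f₂) ∧
  (∀ (s : Fin S) (f : Fin F), (∃ k, P f k = some s) →
      (Finset.univ.filter fun k : Fin K =>
        (∃ f', P f' k = some s) ∧ (P f k).isSome = true).card ≤ L)


namespace MAPDAc

lemma fin_sub_val_of_le {n : ℕ} (a b : Fin n) (h : b.val ≤ a.val) :
    ((a - b : Fin n) : ℕ) = a.val - b.val := by
  rw [Fin.sub_def]
  have ha := a.isLt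
  show (n - b.val + a.val) % n = _
  have h1 : n - b.val + a.val = n + (a.val - b.val) := by omega
  rw [h1, Nat.add_mod_left, Nat.mod_eq_of_lt (by omega)]

variable {q l : ℕ} [NeZero l]

instance : NeZero (2 * l) := ⟨by have := NeZero.ne l; omega⟩

abbrev Blk (q l : ℕ) := {A : Finset (Fin q) // A.card = 2 * l}
abbrev Sym (q l : ℕ) := (Blk q l × Fin l) ⊕ (Blk q l × Fin (q - 2 * l))

def ev (A : Blk q l) (b : Fin (2 * l)) : Fin q := (A.1.orderIsoOfFin A.2 b : Fin q)
lemma ev_mem (A : Blk q l) (b : Fin (2 * l)) : ev A b ∈ A.1 := (A.1.orderIsoOfFin A.2 b).2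
lemma ev_inj (A : Blk q l) : Function.Injective (ev A) := fun a b h =>
  (A.1.orderIsoOfFin A.2).injective (Subtype.ext h)

def idx (A : Blk q l) (j : Fin q) (h : j ∈ A.1) : Fin (2 * l) :=
  (A.1.orderIsoOfFin A.2).symm ⟨j, h⟩

@[simp] lemma ev_idx (A : Blk q l) (j : Fin q) (h : j ∈ A.1) : ev A (idx A j h) = j := by
  simp [ev, idx]

@[simp] lemma idx_ev (A : Blk q l) (b : Fin (2 * l)) (h : ev A b ∈ A.1) :
    idx A (ev A b) h = b := by
  have h : (⟨ev A b, h⟩ : {x // x ∈ A.1}) = A.1.orderIsoOfFin A.2 b := Subtype.ext rfl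
  rw [idx, h, OrderIso.symm_apply_apply]

def lF : Fin (2 * l) := ⟨l, by have := Nat.pos_of_ne_zero (NeZero.ne l); omega⟩
@[simp] lemma lF_val : (lF : Fin (2 * l)).val = l := rfl

def uc (u : Fin l) : Fin (2 * l) := ⟨u.val, by have := u.isLt; omega⟩
@[simp] lemma uc_val (u : Fin l) : (uc u : Fin (2 * l)).val = u.val := rfl

def IsStar (A : Blk q l) (b : Fin (2 * l)) (j : Fin q) : Prop :=
  ∃ r : Fin (2 * l), r.val < l ∧ ev A (b + r) = j

instance (A : Blk q l) (b : Fin (2 * l)) (j : Fin q) : Decidable (IsStar A b j) := by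
  unfold IsStar; infer_instance

lemma not_star_idx {A : Blk q l} {b : Fin (2 * l)} {j : Fin q}
    (hs : ¬ IsStar A b j) (hj : j ∈ A.1) : l ≤ ((idx A j hj - b : Fin (2 * l))).val := by
  by_contra h
  push_neg at h
  exact hs ⟨idx A j hj - b, h, by rw [add_comm, sub_add_cancel, ev_idx]⟩

lemma inl_val_lt {A : Blk q l} {b : Fin (2 * l)} {j : Fin q}
    (hs : ¬ IsStar A b j) (hj : j ∈ A.1) :
    ((idx A j hj - b - lF : Fin (2 * l))).val < l := by
  have h1 := not_star_idx hs hj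
  have h2 := (idx A j hj - b).isLt
  rw [fin_sub_val_of_le _ _ (by simpa using h1)]
  simp only [lF_val]
  omega

def xel (A : Blk q l) (b : Fin (2 * l)) : Fin q := ev A (b + lF)
lemma xel_mem (A : Blk q l) (b : Fin (2 * l)) : xel A b ∈ A.1 := ev_mem _ _

def Gset (A : Blk q l) (b : Fin (2 * l)) (j : Fin q) : Finset (Fin q) :=
  insert j (A.1.erase (xel A b))

lemma Gset_card {A : Blk q l} {b : Fin (2 * l)} {j : Fin q} (hj : j ∉ A.1) :
    (Gset A b j).card = 2 * l := by
  have hpos : 0 < 2 * l := Nat.pos_of_ne_zero (NeZero.ne _)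
  rw [Gset, Finset.card_insert_of_notMem (fun h => hj (Finset.mem_of_mem_erase h)),
    Finset.card_erase_of_mem (xel_mem A b), A.2]
  omega

def GBlk (A : Blk q l) (b : Fin (2 * l)) (j : Fin q) (hj : j ∉ A.1) : Blk q l :=
  ⟨Gset A b j, Gset_card hj⟩

lemma compl_card (G : Blk q l) : (G.1ᶜ).card = q - 2 * l := by
  rw [Finset.card_compl, G.2, Fintype.card_fin]

def cev (G : Blk q l) (u : Fin (q - 2 * l)) : Fin q :=
  ((G.1ᶜ).orderIsoOfFin (compl_card G) u : Fin q)
lemma cev_mem (G : Blk q l) (u : Fin (q - 2 * l)) : cev G u ∈ G.1ᶜ :=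
  ((G.1ᶜ).orderIsoOfFin (compl_card G) u).2
lemma cev_not_mem (G : Blk q l) (u : Fin (q - 2 * l)) : cev G u ∉ G.1 :=
  Finset.mem_compl.mp (cev_mem G u)

def cidx (G : Blk q l) (x : Fin q) (hx : x ∈ G.1ᶜ) : Fin (q - 2 * l) :=
  ((G.1ᶜ).orderIsoOfFin (compl_card G)).symm ⟨x, hx⟩

@[simp] lemma cidx_cev (G : Blk q l) (u : Fin (q - 2 * l)) (h : cev G u ∈ G.1ᶜ) :
    cidx G (cev G u) h = u := by
  have h : (⟨cev G u, h⟩ : {x // x ∈ G.1ᶜ}) = (G.1ᶜ).orderIsoOfFin (compl_card G) u :=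
    Subtype.ext rfl
  rw [cidx, h, OrderIso.symm_apply_apply]

@[simp] lemma cev_cidx (G : Blk q l) (x : Fin q) (hx : x ∈ G.1ᶜ) :
    cev G (cidx G x hx) = x := by
  simp [cev, cidx]

lemma cidx_eq_of {G : Blk q l} {x : Fin q} {u : Fin (q - 2 * l)}
    (hx : x = cev G u) (hm : x ∈ G.1ᶜ) : cidx G x hm = u := by
  subst hx; exact cidx_cev G u hm

lemma xel_mem_compl {A : Blk q l} {b : Fin (2 * l)} {j : Fin q} (hj : j ∉ A.1) :
    xel A b ∈ (GBlk A b j hj).1ᶜ := by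
  have hx : xel A b ∈ A.1 := xel_mem A b
  rw [Finset.mem_compl]
  intro hmem
  rcases Finset.mem_insert.mp hmem with h | h
  · exact hj (h ▸ hx)
  · exact (Finset.notMem_erase _ _) h

def P' (A : Blk q l) (b : Fin (2 * l)) (j : Fin q) : Option (Sym q l) :=
  if hs : IsStar A b j then none
  else if hj : j ∈ A.1 then
    some (Sum.inl (A, ⟨((idx A j hj - b - lF : Fin (2 * l))).val, inl_val_lt hs hj⟩))
  else
    some (Sum.inr (GBlk A b j hj, cidx (GBlk A b j hj) (xel A b) (xel_mem_compl hj)))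

lemma P'_none_iff {A : Blk q l} {b : Fin (2 * l)} {j : Fin q} :
    P' A b j = none ↔ IsStar A b j := by
  unfold P'
  split_ifs <;> simp_all

lemma P'_inl_iff {A A₀ : Blk q l} {b : Fin (2 * l)} {j : Fin q} {u : Fin l} :
    P' A b j = some (Sum.inl (A₀, u)) ↔ A = A₀ ∧ j = ev A (b + lF + uc u) := by
  constructor
  · intro h
    unfold P' at h
    split_ifs at h with hs hj
    · simp only [Option.some_inj, Sum.inl.injEq, Prod.mk.injEq] at h
      obtain ⟨hA, hu⟩ := h
      refine ⟨hA, ?_⟩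
      have hd : idx A j hj - b - lF = uc u := by
        apply Fin.ext
        rw [← hu]
        rfl
      have hidx : idx A j hj = b + lF + uc u := by
        have := hd
        rw [sub_sub, sub_eq_iff_eq_add] at this
        rw [this]; abel
      rw [← hidx, ev_idx]
    · simp at h
  · rintro ⟨rfl, rfl⟩
    have hmem : ev A (b + lF + uc u) ∈ A.1 := ev_mem _ _
    have hs : ¬ IsStar A b (ev A (b + lF + uc u)) := by
      rintro ⟨r, hr, hevr⟩
      have : b + r = b + lF + uc u := ev_inj A hevr
      have hru : r = lF + uc u := by
        rw [add_assoc] at this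
        exact add_left_cancel this
      have : r.val = (l + u.val) % (2 * l) := by rw [hru, Fin.val_add, lF_val, uc_val]
      rw [Nat.mod_eq_of_lt (by have := u.isLt; omega)] at this
      omega
    unfold P'
    rw [dif_neg hs, dif_pos hmem]
    simp only [Option.some_inj, Sum.inl.injEq, Prod.mk.injEq, true_and]
    apply Fin.ext
    simp only [uc_val]
    have hidx : idx A (ev A (b + lF + uc u)) hmem = b + lF + uc u := idx_ev _ _ _
    rw [hidx]
    have : b + lF + uc u - b - lF = uc u := by abel
    rw [this, uc_val]

lemma P'_inr_elim {A G : Blk q l} {b : Fin (2 * l)} {j : Fin q} {u : Fin (q - 2 * l)}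
    (h : P' A b j = some (Sum.inr (G, u))) :
    ∃ hj : j ∉ A.1, G = GBlk A b j hj ∧ xel A b = cev G u := by
  unfold P' at h
  split_ifs at h with hs hj
  · simp at h
  · simp only [Option.some_inj, Sum.inr.injEq, Prod.mk.injEq] at h
    obtain ⟨hG, hu⟩ := h
    subst hG
    refine ⟨hj, rfl, ?_⟩
    rw [← hu, cev_cidx]

lemma P'_inr_col {A G : Blk q l} {b : Fin (2 * l)} {j : Fin q} {u : Fin (q - 2 * l)}
    (h : P' A b j = some (Sum.inr (G, u))) : j ∈ G.1 := by
  obtain ⟨hj, hG, -⟩ := P'_inr_elim h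
  rw [hG]
  exact Finset.mem_insert_self _ _

lemma P'_inr_window {A G : Blk q l} {b : Fin (2 * l)} {j : Fin q} {u : Fin (q - 2 * l)}
    (h : P' A b j = some (Sum.inr (G, u))) (r : Fin (2 * l)) (hr : r.val < l) :
    ev A (b + r) ∈ G.1 := by
  obtain ⟨hj, hG, -⟩ := P'_inr_elim h
  rw [hG]
  apply Finset.mem_insert_of_mem
  rw [Finset.mem_erase]
  refine ⟨?_, ev_mem _ _⟩
  intro heq
  have : b + r = b + lF := ev_inj A heq
  have : r = lF := add_left_cancel this
  rw [this, lF_val] at hr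
  omega

lemma P'_inr_intro (G : Blk q l) (u : Fin (q - 2 * l)) (j : Fin q) (hj : j ∈ G.1) :
    ∃ (A : Blk q l) (b : Fin (2 * l)),
      P' A b j = some (Sum.inr (G, u)) ∧ j ∉ A.1 := by
  set x := cev G u with hxdef
  have hxG : x ∉ G.1 := cev_not_mem G u
  have hxe : x ∉ G.1.erase j := fun h => hxG (Finset.mem_of_mem_erase h)
  have hpos : 0 < 2 * l := Nat.pos_of_ne_zero (NeZero.ne _)
  have hcard : (insert x (G.1.erase j)).card = 2 * l := by
    rw [Finset.card_insert_of_notMem hxe, Finset.card_erase_of_mem hj, G.2]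
    omega
  set A : Blk q l := ⟨insert x (G.1.erase j), hcard⟩ with hAdef
  have hxA : x ∈ A.1 := Finset.mem_insert_self _ _
  have hjA : j ∉ A.1 := by
    intro hmem
    rcases Finset.mem_insert.mp hmem with h | h
    · exact hxG (h ▸ hj)
    · exact (Finset.notMem_erase _ _) h
  set b : Fin (2 * l) := idx A x hxA - lF with hbdef
  have hblF : b + lF = idx A x hxA := by rw [hbdef, sub_add_cancel]
  have hxel : xel A b = x := by rw [xel, hblF, ev_idx]
  have hs : ¬ IsStar A b j := by
    rintro ⟨r, hr, hevr⟩
    exact hjA (hevr ▸ ev_mem A (b + r))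
  refine ⟨A, b, ?_, hjA⟩
  unfold P'
  rw [dif_neg hs, dif_neg hjA]
  have hGB : GBlk A b j hjA = G := by
    apply Subtype.ext
    show Gset A b j = G.1
    rw [Gset, hxel]
    show insert j ((insert x (G.1.erase j)).erase x) = G.1
    rw [Finset.erase_insert hxe, Finset.insert_erase hj]
  simp only [Option.some_inj, Sum.inr.injEq, Prod.mk.injEq]
  refine ⟨hGB, ?_⟩
  have : xel A b = cev (GBlk A b j hjA) u := by rw [hxel, hGB]
  exact cidx_eq_of this _

-- continuing inside namespace MAPDAc, variables {q l} [NeZero l]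

lemma mem_of_star {A : Blk q l} {b : Fin (2 * l)} {j : Fin q} (h : IsStar A b j) :
    j ∈ A.1 := by
  obtain ⟨r, -, hev⟩ := h
  exact hev ▸ ev_mem A (b + r)

lemma star_sub_lt {A : Blk q l} {b : Fin (2 * l)} {j : Fin q} (h : IsStar A b j) :
    ((idx A j (mem_of_star h) - b : Fin (2 * l))).val < l := by
  obtain ⟨r, hr, hev⟩ := h
  have hidx : idx A j (mem_of_star ⟨r, hr, hev⟩) = b + r := by
    apply ev_inj A
    rw [ev_idx, hev]
  rw [hidx, add_sub_cancel_left]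
  exact hr

lemma card_star_filter (j : Fin q) :
    (Finset.univ.filter fun Ab : Blk q l × Fin (2 * l) => IsStar Ab.1 Ab.2 j).card
      = (Finset.univ.filter fun A : Blk q l => j ∈ A.1).card * l := by
  have hprod : ((Finset.univ.filter fun A : Blk q l => j ∈ A.1) ×ˢ
      (Finset.univ : Finset (Fin l))).card
      = (Finset.univ.filter fun A : Blk q l => j ∈ A.1).card * l := by
    rw [Finset.card_product, Finset.card_univ, Fintype.card_fin]
  rw [← hprod]
  refine Finset.card_bij'
    (fun Ab h => (Ab.1, ⟨(idx Ab.1 j (mem_of_star (by simpa using (Finset.mem_filter.mp h).2))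
        - Ab.2).val, star_sub_lt (by simpa using (Finset.mem_filter.mp h).2)⟩))
    (fun Ar h => (Ar.1, idx Ar.1 j (by
        simpa using ((Finset.mem_product.mp h).1)) - uc Ar.2)) ?_ ?_ ?_ ?_
  · intro Ab h
    refine Finset.mem_product.mpr ⟨?_, Finset.mem_univ _⟩
    exact Finset.mem_filter.mpr ⟨Finset.mem_univ _,
      mem_of_star (by simpa using (Finset.mem_filter.mp h).2)⟩
  · intro Ar h
    refine Finset.mem_filter.mpr ⟨Finset.mem_univ _, ?_⟩
    exact ⟨uc Ar.2, by simpa using (uc Ar.2).isLt, by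
      rw [sub_add_cancel, ev_idx]⟩
  · rintro ⟨A0, b0⟩ h
    dsimp only
    have hst : IsStar A0 b0 j := by simpa using (Finset.mem_filter.mp h).2
    simp only [Prod.mk.injEq, true_and]
    have huc : uc (⟨((idx A0 j (mem_of_star hst) - b0 : Fin (2 * l))).val,
        star_sub_lt hst⟩ : Fin l) = idx A0 j (mem_of_star hst) - b0 := Fin.ext rfl
    rw [huc, sub_sub_cancel]
  · rintro ⟨A0, r0⟩ h
    dsimp only
    simp only [Prod.mk.injEq, true_and]
    apply Fin.ext
    show ((idx A0 j _ - (idx A0 j _ - uc r0) : Fin (2 * l))).val = r0.val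
    rw [sub_sub_cancel]
    rfl

lemma card_blk_mem (j : Fin q) :
    (Finset.univ.filter fun A : Blk q l => j ∈ A.1).card = (q - 1).choose (2 * l - 1) := by
  have hpos : 0 < 2 * l := Nat.pos_of_ne_zero (NeZero.ne _)
  have hc : (Finset.powersetCard (2 * l - 1) ((Finset.univ : Finset (Fin q)).erase j)).card
      = (q - 1).choose (2 * l - 1) := by
    rw [Finset.card_powersetCard, Finset.card_erase_of_mem (Finset.mem_univ j),
      Finset.card_univ, Fintype.card_fin]
  rw [← hc]
  refine Finset.card_bij' (fun A _ => A.1.erase j)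
    (fun B hB => (⟨insert j B, by
      have hmem := Finset.mem_powersetCard.mp hB
      have hjB : j ∉ B := fun hj => (Finset.mem_erase.mp (hmem.1 hj)).1 rfl
      rw [Finset.card_insert_of_notMem hjB, hmem.2]
      omega⟩ : Blk q l)) ?_ ?_ ?_ ?_
  · intro A hA
    have hjA : j ∈ A.1 := by simpa using (Finset.mem_filter.mp hA).2
    rw [Finset.mem_powersetCard]
    constructor
    · intro x hx
      rw [Finset.mem_erase]
      exact ⟨(Finset.mem_erase.mp hx).1, Finset.mem_univ x⟩
    · rw [Finset.card_erase_of_mem hjA, A.2]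
  · intro B hB
    exact Finset.mem_filter.mpr ⟨Finset.mem_univ _, Finset.mem_insert_self _ _⟩
  · intro A hA
    have hjA : j ∈ A.1 := by simpa using (Finset.mem_filter.mp hA).2
    exact Subtype.ext (Finset.insert_erase hjA)
  · intro B hB
    have hmem := Finset.mem_powersetCard.mp hB
    have hjB : j ∉ B := fun hj => (Finset.mem_erase.mp (hmem.1 hj)).1 rfl
    exact Finset.erase_insert hjB

lemma uniq_inl {A₁ A₂ A : Blk q l} {b₁ b₂ : Fin (2 * l)} {j : Fin q} {u : Fin l}
    (h₁ : P' A₁ b₁ j = some (Sum.inl (A, u))) (h₂ : P' A₂ b₂ j = some (Sum.inl (A, u))) :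
    A₁ = A₂ ∧ b₁ = b₂ := by
  obtain ⟨hA₁, hj₁⟩ := P'_inl_iff.mp h₁
  obtain ⟨hA₂, hj₂⟩ := P'_inl_iff.mp h₂
  have hAA : A₁ = A₂ := hA₁.trans hA₂.symm
  subst hAA
  have heq := hj₁.symm.trans hj₂
  exact ⟨rfl, add_right_cancel (add_right_cancel (ev_inj _ heq))⟩

lemma uniq_inr {A₁ A₂ G : Blk q l} {b₁ b₂ : Fin (2 * l)} {j : Fin q} {u : Fin (q - 2 * l)}
    (h₁ : P' A₁ b₁ j = some (Sum.inr (G, u))) (h₂ : P' A₂ b₂ j = some (Sum.inr (G, u))) :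
    A₁ = A₂ ∧ b₁ = b₂ := by
  obtain ⟨hj₁, hG₁, hx₁⟩ := P'_inr_elim h₁
  obtain ⟨hj₂, hG₂, hx₂⟩ := P'_inr_elim h₂
  have key : ∀ (A : Blk q l) (b : Fin (2 * l)) (hj : j ∉ A.1),
      G = GBlk A b j hj → xel A b = cev G u →
      A.1 = insert (cev G u) (G.1.erase j) := by
    intro A b hj hG hx
    have h1 : G.1.erase j = A.1.erase (xel A b) := by
      rw [hG]
      show (insert j (A.1.erase (xel A b))).erase j = _
      apply Finset.erase_insert
      intro hmem
      exact hj (Finset.mem_of_mem_erase hmem)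
    rw [h1, ← hx, Finset.insert_erase (xel_mem A b)]
  have hA : A₁ = A₂ := Subtype.ext (by
    rw [key A₁ b₁ hj₁ hG₁ hx₁, key A₂ b₂ hj₂ hG₂ hx₂])
  subst hA
  refine ⟨rfl, ?_⟩
  have : ev A₁ (b₁ + lF) = ev A₁ (b₂ + lF) := by
    show xel A₁ b₁ = xel A₁ b₂
    rw [hx₁, hx₂]
  exact add_right_cancel (ev_inj A₁ this)

lemma exists_inl (A : Blk q l) (u : Fin l) :
    ∃ (b : Fin (2 * l)) (j : Fin q), P' A b j = some (Sum.inl (A, u)) :=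
  ⟨lF, ev A (lF + lF + uc u), P'_inl_iff.mpr ⟨rfl, rfl⟩⟩

lemma exists_inr (hql : 2 * l ≤ q) (G : Blk q l) (u : Fin (q - 2 * l)) :
    ∃ (A : Blk q l) (b : Fin (2 * l)) (j : Fin q), P' A b j = some (Sum.inr (G, u)) := by
  have hpos : 0 < 2 * l := Nat.pos_of_ne_zero (NeZero.ne _)
  have hne : G.1.Nonempty := Finset.card_pos.mp (by rw [G.2]; omega)
  obtain ⟨j, hj⟩ := hne
  obtain ⟨A, b, h, -⟩ := P'_inr_intro G u j hj
  exact ⟨A, b, j, h⟩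

variable {a : ℕ}

lemma isSome_not_star {A : Blk q l} {b : Fin (2 * l)} {j : Fin q}
    (h : (P' A b j).isSome = true) : ¬ IsStar A b j := by
  intro hs
  rw [Option.isSome_iff_ne_none] at h
  exact h (P'_none_iff.mpr hs)

lemma count_inl (A : Blk q l) (b : Fin (2 * l)) (u : Fin l) (T : Finset (Fin q × Fin a))
    (hT : ∀ k ∈ T,
      ((∃ (A' : Blk q l) (b' : Fin (2 * l)), P' A' b' k.1 = some (Sum.inl (A, u))) ∧
        (P' A b k.1).isSome = true)) :
    T.card ≤ l * a := by
  have hsub : T ⊆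
      Finset.image (fun rc : Fin l × Fin a => ((ev A (b + lF + uc rc.1), rc.2) : Fin q × Fin a))
        Finset.univ := by
    intro k hk
    obtain ⟨⟨A', b', hP⟩, hsome⟩ := hT k hk
    obtain ⟨hAA, hj⟩ := P'_inl_iff.mp hP
    subst hAA
    have hjA : k.1 ∈ A'.1 := hj ▸ ev_mem _ _
    have hs : ¬ IsStar A' b k.1 := isSome_not_star hsome
    rw [Finset.mem_image]
    refine ⟨(⟨((idx A' k.1 hjA - b - lF : Fin (2 * l))).val, inl_val_lt hs hjA⟩, k.2), 
      Finset.mem_univ _, ?_⟩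
    dsimp only
    have huc : uc (⟨((idx A' k.1 hjA - b - lF : Fin (2 * l))).val, inl_val_lt hs hjA⟩ : Fin l)
        = idx A' k.1 hjA - b - lF := Fin.ext rfl
    rw [huc]
    have harith : b + lF + (idx A' k.1 hjA - b - lF) = idx A' k.1 hjA := by abel
    rw [harith, ev_idx]
  calc _ ≤ (Finset.image (fun rc : Fin l × Fin a =>
        ((ev A (b + lF + uc rc.1), rc.2) : Fin q × Fin a)) Finset.univ).card :=
      Finset.card_le_card hsub
    _ ≤ (Finset.univ : Finset (Fin l × Fin a)).card := Finset.card_image_le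
    _ = l * a := by rw [Finset.card_univ]; simp

lemma count_inr (A : Blk q l) (b : Fin (2 * l)) (G : Blk q l) (u : Fin (q - 2 * l))
    (hrow : ∃ j₀ : Fin q, P' A b j₀ = some (Sum.inr (G, u))) (T : Finset (Fin q × Fin a))
    (hT : ∀ k ∈ T,
      ((∃ (A' : Blk q l) (b' : Fin (2 * l)), P' A' b' k.1 = some (Sum.inr (G, u))) ∧
        (P' A b k.1).isSome = true)) :
    T.card ≤ l * a := by
  obtain ⟨j₀, hP0⟩ := hrow
  set W : Finset (Fin q) := Finset.image (fun r : Fin l => ev A (b + uc r)) Finset.univ with hW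
  have hWcard : W.card = l := by
    rw [hW, Finset.card_image_of_injective _ (fun r₁ r₂ h => by
      have h2 : uc r₁ = uc r₂ := add_left_cancel (ev_inj A h)
      have h3 : (uc r₁).val = (uc r₂).val := congrArg Fin.val h2
      exact Fin.ext (by simpa using h3)), Finset.card_univ, Fintype.card_fin]
  have hWG : W ⊆ G.1 := by
    intro x hx
    obtain ⟨r, -, hr⟩ := Finset.mem_image.mp hx
    exact hr ▸ P'_inr_window hP0 (uc r) (by simpa using r.isLt)
  have hsub : T ⊆ (G.1 \ W) ×ˢ Finset.univ := by
    intro k hk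
    obtain ⟨⟨A', b', hP⟩, hsome⟩ := hT k hk
    refine Finset.mem_product.mpr ⟨?_, Finset.mem_univ _⟩
    rw [Finset.mem_sdiff]
    refine ⟨P'_inr_col hP, ?_⟩
    intro hmem
    obtain ⟨r, -, hr⟩ := Finset.mem_image.mp hmem
    exact (isSome_not_star hsome) ⟨uc r, by simpa using r.isLt, hr⟩
  calc _ ≤ ((G.1 \ W) ×ˢ (Finset.univ : Finset (Fin a))).card := Finset.card_le_card hsub
    _ = (G.1 \ W).card * a := by rw [Finset.card_product, Finset.card_univ, Fintype.card_fin]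
    _ = l * a := by rw [Finset.card_sdiff_of_subset hWG, G.2, hWcard]; congr 1; omega

lemma map_equiv_eq_some {α β : Type*} (e : α ≃ β) (o : Option α) (b : β) :
    o.map e = some b ↔ o = some (e.symm b) := by
  cases o with
  | none => simp
  | some x =>
    simp only [Option.map_some, Option.some_inj]
    constructor
    · rintro rfl; simp
    · rintro rfl; simp

lemma card_filter_equiv {α β : Type*} [Fintype α] [Fintype β] (e : β ≃ α)
    (p : α → Prop) [DecidablePred p] :
    (Finset.univ.filter fun b => p (e b)).card = (Finset.univ.filter p).card := by
  refine Finset.card_bij' (fun b _ => e b) (fun a _ => e.symm a) ?_ ?_ ?_ ?_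
  · intro b hb
    simp only [Finset.mem_filter, Finset.mem_univ, true_and]
    exact (Finset.mem_filter.mp hb).2
  · intro a ha
    simp only [Finset.mem_filter, Finset.mem_univ, true_and, Equiv.apply_symm_apply]
    exact (Finset.mem_filter.mp ha).2
  · intro b hb; simp
  · intro a ha; simp

end MAPDAc

open MAPDAc in
set_option maxHeartbeats 1600000 in
theorem exists_MAPDA_silenced' (K t : ℕ) (hK : 0 < K) (ht : 0 < t) (h2t : 2 * t ≤ K)
    (α F Z S : ℕ) (hα : α = Nat.gcd K t)
    (hF : F = (2 * t / α) * Nat.choose (K / α) (2 * t / α))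
    (hZ : Z = (t / α) * Nat.choose (K / α - 1) (2 * t / α - 1))
    (hS : S = ((K - t) / α) * Nat.choose (K / α) (2 * t / α)) :
    (∃ P : Fin F → Fin K → Option (Fin S), IsMAPDA t K F Z S P) ∧
    2 * t * S = (K - t) * F ∧
    (S : ℚ) / (F : ℚ) = ((K - t : ℕ) : ℚ) / (2 * (t : ℚ)) := by
  have hα0 : 0 < α := by
    rw [hα]
    exact Nat.gcd_pos_of_pos_left _ hK
  obtain ⟨l, hl⟩ : α ∣ t := hα ▸ Nat.gcd_dvd_right K t
  obtain ⟨q, hq⟩ : α ∣ K := hα ▸ Nat.gcd_dvd_left K t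
  have hl0 : 0 < l := by
    rcases Nat.eq_zero_or_pos l with h | h
    · rw [h, Nat.mul_zero] at hl; omega
    · exact h
  have hq0 : 0 < q := by
    rcases Nat.eq_zero_or_pos q with h | h
    · rw [h, Nat.mul_zero] at hq; omega
    · exact h
  have hql : 2 * l ≤ q := by
    have h1 : α * (2 * l) ≤ α * q := by
      rw [hq] at h2t; rw [hl] at h2t
      calc α * (2 * l) = 2 * (α * l) := by ring
        _ ≤ α * q := h2t
    exact Nat.le_of_mul_le_mul_left h1 hα0
  haveI : NeZero l := ⟨hl0.ne'⟩
  -- simplify the parameter expressions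
  have hta : t / α = l := by rw [hl, Nat.mul_div_cancel_left _ hα0]
  have h2ta : 2 * t / α = 2 * l := by
    rw [hl, show 2 * (α * l) = α * (2 * l) by ring, Nat.mul_div_cancel_left _ hα0]
  have hKa : K / α = q := by rw [hq, Nat.mul_div_cancel_left _ hα0]
  have hKt : K - t = α * (q - l) := by
    rw [hq, hl, Nat.mul_sub]
  have hKta : (K - t) / α = q - l := by rw [hKt, Nat.mul_div_cancel_left _ hα0]
  rw [h2ta, hKa] at hF
  rw [hta, hKa, h2ta] at hZ
  rw [hKta, hKa, h2ta] at hS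
  -- cardinalities
  have hcBlk : Fintype.card (Blk q l) = q.choose (2 * l) := by
    rw [Fintype.card_finset_len, Fintype.card_fin]
  have hcR : Fintype.card (Blk q l × Fin (2 * l)) = F := by
    rw [Fintype.card_prod, hcBlk, Fintype.card_fin, hF, Nat.mul_comm]
  have hcK : Fintype.card (Fin q × Fin α) = K := by
    rw [Fintype.card_prod, Fintype.card_fin, Fintype.card_fin, hq, Nat.mul_comm]
  have hcS : Fintype.card (Sym q l) = S := by
    rw [Fintype.card_sum, Fintype.card_prod, Fintype.card_prod, hcBlk,
      Fintype.card_fin, Fintype.card_fin, hS]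
    have : q.choose (2 * l) * l + q.choose (2 * l) * (q - 2 * l)
        = (q - l) * q.choose (2 * l) := by
      rw [← Nat.mul_add, Nat.mul_comm]
      congr 1
      omega
    exact this
  have eR : Fin F ≃ (Blk q l × Fin (2 * l)) := (Fintype.equivFinOfCardEq hcR).symm
  have eK : Fin K ≃ (Fin q × Fin α) := (Fintype.equivFinOfCardEq hcK).symm
  have eS : (Sym q l) ≃ Fin S := Fintype.equivFinOfCardEq hcS
  set P : Fin F → Fin K → Option (Fin S) :=
    fun f k => (P' (eR f).1 (eR f).2 (eK k).1).map eS with hPdef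
  have hPsome : ∀ (f : Fin F) (k : Fin K) (s : Fin S),
      P f k = some s ↔ P' (eR f).1 (eR f).2 (eK k).1 = some (eS.symm s) := by
    intro f k s
    rw [hPdef]
    exact map_equiv_eq_some eS _ s
  refine ⟨⟨P, ?_, ?_, ?_, ?_⟩, ?_, ?_⟩
  · -- C1
    intro k
    have h1 : ∀ f : Fin F, (P f k = none) ↔ IsStar (eR f).1 (eR f).2 (eK k).1 := by
      intro f
      rw [hPdef]
      simp only [Option.map_eq_none_iff]
      exact P'_none_iff
    calc (Finset.univ.filter fun f : Fin F => P f k = none).card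
        = (Finset.univ.filter fun f : Fin F =>
            IsStar (eR f).1 (eR f).2 (eK k).1).card := by
          exact congrArg Finset.card (Finset.filter_congr (fun f _ => by
            rw [h1 f]))
      _ = (Finset.univ.filter fun Ab : Blk q l × Fin (2 * l) =>
            IsStar Ab.1 Ab.2 (eK k).1).card :=
          card_filter_equiv eR (fun Ab : Blk q l × Fin (2 * l) => IsStar Ab.1 Ab.2 (eK k).1)
      _ = (Finset.univ.filter fun A : Blk q l => (eK k).1 ∈ A.1).card * l :=
          card_star_filter _
      _ = (q - 1).choose (2 * l - 1) * l := by rw [card_blk_mem]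
      _ = Z := by rw [hZ, Nat.mul_comm]
  · -- C2
    intro s
    have ha0 : 0 < α := hα0
    rcases hsym : eS.symm s with ⟨A, u⟩ | ⟨G, u⟩
    · obtain ⟨b, j, hP'⟩ := exists_inl A u
      refine ⟨eR.symm (A, b), eK.symm (j, ⟨0, ha0⟩), ?_⟩
      rw [hPsome]
      simp only [Equiv.apply_symm_apply]
      rw [hsym]
      exact hP'
    · obtain ⟨A, b, j, hP'⟩ := exists_inr hql G u
      refine ⟨eR.symm (A, b), eK.symm (j, ⟨0, ha0⟩), ?_⟩
      rw [hPsome]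
      simp only [Equiv.apply_symm_apply]
      rw [hsym]
      exact hP'
  · -- C3
    intro s k f₁ f₂ h₁ h₂
    rw [hPsome] at h₁ h₂
    have key : (eR f₁).1 = (eR f₂).1 ∧ (eR f₁).2 = (eR f₂).2 := by
      rcases hsym : eS.symm s with ⟨A, u⟩ | ⟨G, u⟩
      · rw [hsym] at h₁ h₂
        exact uniq_inl h₁ h₂
      · rw [hsym] at h₁ h₂
        exact uniq_inr h₁ h₂
    have : eR f₁ = eR f₂ := Prod.ext key.1 key.2
    exact eR.injective this
  · -- C4
    intro s f hex
    have ht_la : t = l * α := by rw [hl]; ring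
    set T : Finset (Fin K) := (Finset.univ.filter fun k : Fin K =>
      (∃ f', P f' k = some s) ∧ (P f k).isSome = true) with hTdef
    have hTcard : T.card = (T.image eK).card :=
      (Finset.card_image_of_injective T eK.injective).symm
    have hmemT : ∀ c ∈ T.image eK, ∃ k ∈ T, eK k = c := by
      intro c hc
      obtain ⟨k, hk, hke⟩ := Finset.mem_image.mp hc
      exact ⟨k, hk, hke⟩
    have hTprop : ∀ k ∈ T, (∃ f', P f' k = some s) ∧ (P f k).isSome = true := by
      intro k hk
      exact (Finset.mem_filter.mp hk).2
    rw [hTcard, ht_la]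
    rcases hsym : eS.symm s with ⟨A, u⟩ | ⟨G, u⟩
    · obtain ⟨k₀, hk₀⟩ := hex
      rw [hPsome, hsym] at hk₀
      have hA : (eR f).1 = A := (P'_inl_iff.mp hk₀).1
      refine count_inl A (eR f).2 u (T.image eK) ?_
      intro c hc
      obtain ⟨k, hk, hke⟩ := hmemT c hc
      obtain ⟨⟨f', hf'⟩, hs⟩ := hTprop k hk
      rw [hPsome, hsym] at hf'
      subst hke
      refine ⟨⟨(eR f').1, (eR f').2, hf'⟩, ?_⟩
      rw [hPdef] at hs
      rw [← hA]
      simpa using hs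
    · obtain ⟨k₀, hk₀⟩ := hex
      rw [hPsome, hsym] at hk₀
      have hrow : ∃ j₀ : Fin q, P' (eR f).1 (eR f).2 j₀ = some (Sum.inr (G, u)) :=
        ⟨(eK k₀).1, hk₀⟩
      refine count_inr (eR f).1 (eR f).2 G u hrow (T.image eK) ?_
      intro c hc
      obtain ⟨k, hk, hke⟩ := hmemT c hc
      obtain ⟨⟨f', hf'⟩, hs⟩ := hTprop k hk
      rw [hPsome, hsym] at hf'
      subst hke
      refine ⟨⟨(eR f').1, (eR f').2, hf'⟩, ?_⟩
      rw [hPdef] at hs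
      simpa using hs
  · -- arithmetic equality
    rw [hF, hS, hKt, hl]
    ring
  · -- NDT
    have hF0 : (F : ℚ) ≠ 0 := by
      have : 0 < F := by
        rw [hF]
        exact Nat.mul_pos (by omega) (Nat.choose_pos hql)
      exact_mod_cast this.ne'
    have ht0 : (2 * (t : ℚ)) ≠ 0 := by
      have : (0 : ℚ) < t := by exact_mod_cast ht
      positivity
    rw [div_eq_div_iff hF0 ht0]
    have harith : 2 * t * S = (K - t) * F := by
      rw [hF, hS, hKt, hl]; ring
    push_cast
    have : ((2 * t * S : ℕ) : ℚ) = (((K - t) * F : ℕ) : ℚ) := by exact_mod_cast harith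
    push_cast at this
    linarith

/-- For all positive integers `K` and `t` with `2t ≤ K`, with `α = gcd(K, t)`,
`F = (2t/α)·C(K/α, 2t/α)`, `Z = (t/α)·C(K/α − 1, 2t/α − 1)` and
`S = ((K−t)/α)·C(K/α, 2t/α)`, there exists a `(t, K, F, Z, S)` MAPDA, and
moreover `2t·S = (K−t)·F`, so the NDT `S/F` equals `(K−t)/(2t)`. -/
theorem exists_MAPDA_silenced (K t : ℕ) (hK : 0 < K) (ht : 0 < t) (h2t : 2 * t ≤ K)
    (α F Z S : ℕ) (hα : α = Nat.gcd K t)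
    (hF : F = (2 * t / α) * Nat.choose (K / α) (2 * t / α))
    (hZ : Z = (t / α) * Nat.choose (K / α - 1) (2 * t / α - 1))
    (hS : S = ((K - t) / α) * Nat.choose (K / α) (2 * t / α)) :
    (∃ P : Fin F → Fin K → Option (Fin S), IsMAPDA t K F Z S P) ∧
    2 * t * S = (K - t) * F ∧
    (S : ℚ) / (F : ℚ) = ((K - t : ℕ) : ℚ) / (2 * (t : ℚ)) := by
  exact exists_MAPDA_silenced' K t hK ht h2t α F Z S hα hF hZ hS
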